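/- Define N₅(η) := cosh(η)/sinh³(η) + 2(1 − coth η) for η > 0. Then N₅(η) > 0 for all sufficiently large η and lim_{η→∞} (1/η) · log N₅(η) = −4. -/

import Mathlib

open Real Filter

/-- Numerator of the hitting probability of the 5-dimensional hyperbolic Brownian motion:
`N₅(η) = cosh η / sinh³ η + 2 (1 - coth η)`. -/
noncomputable def N₅ (η : ℝ) : ℝ :=
  Real.cosh η / Real.sinh η ^ 3 + 2 * (1 - Real.cosh η / Real.sinh η)

lemma N5_eq {η : ℝ} (hη : 0 < η) :
    N₅ η = 4 * Real.exp (-η) ^ 4 * (3 - Real.exp (-η) ^ 2) / (1 - Real.exp (-η) ^ 2) ^ 3 := by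
  have hx1 : 1 < Real.exp η := by
    have := Real.add_one_le_exp η
    nlinarith [Real.exp_pos η]
  have hx : Real.exp η ≠ 0 := Real.exp_ne_zero η
  have h2 : Real.exp η ^ 2 - 1 ≠ 0 := by nlinarith
  have A : Real.sinh η = (Real.exp η ^ 2 - 1) / (2 * Real.exp η) := by
    rw [Real.sinh_eq, Real.exp_neg]; field_simp
  have B : Real.cosh η = (Real.exp η ^ 2 + 1) / (2 * Real.exp η) := by
    rw [Real.cosh_eq, Real.exp_neg]; field_simp
  have C : Real.exp (-η) ^ 2 = (Real.exp η ^ 2)⁻¹ := by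
    rw [Real.exp_neg]; rw [inv_pow]
  have D : Real.exp (-η) ^ 4 = (Real.exp η ^ 4)⁻¹ := by
    rw [Real.exp_neg]; rw [inv_pow]
  unfold N₅
  rw [A, B, C, D]
  have h2' : 1 - (Real.exp η ^ 2)⁻¹ ≠ 0 := by
    have : (Real.exp η ^ 2)⁻¹ < 1 := by
      rw [inv_lt_one_iff₀]; right; nlinarith
    intro h; linarith [sub_eq_zero.mp h]
  field_simp
  ring

lemma N5_pos {η : ℝ} (hη : 0 < η) : 0 < N₅ η := by
  rw [N5_eq hη]
  have h1 : Real.exp (-η) < 1 := Real.exp_lt_one_iff.mpr (neg_lt_zero.mpr hη)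
  have h0 : (0:ℝ) < Real.exp (-η) := Real.exp_pos _
  have ha : Real.exp (-η) ^ 2 < 1 := by nlinarith
  have hb : (0:ℝ) < 3 - Real.exp (-η) ^ 2 := by nlinarith
  have hc : (0:ℝ) < 1 - Real.exp (-η) ^ 2 := by linarith
  positivity

lemma N5_log {η : ℝ} (hη : 0 < η) :
    Real.log (N₅ η) = -4 * η +
      (Real.log 4 + Real.log (3 - Real.exp (-η) ^ 2) - 3 * Real.log (1 - Real.exp (-η) ^ 2)) := by
  have h1 : Real.exp (-η) < 1 := Real.exp_lt_one_iff.mpr (neg_lt_zero.mpr hη)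
  have h0 : (0:ℝ) < Real.exp (-η) := Real.exp_pos _
  have ha : Real.exp (-η) ^ 2 < 1 := by nlinarith
  have hb : (3:ℝ) - Real.exp (-η) ^ 2 ≠ 0 := by nlinarith
  have hc : (1:ℝ) - Real.exp (-η) ^ 2 ≠ 0 := by intro h; nlinarith
  have hd : (4:ℝ) * Real.exp (-η) ^ 4 ≠ 0 := by positivity
  rw [N5_eq hη, Real.log_div (by positivity) (by positivity), Real.log_mul hd hb,
    Real.log_mul (by norm_num) (by positivity), Real.log_pow, Real.log_pow, Real.log_exp]
  push_cast
  ring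

/-- `N₅` is eventually positive and `lim_{η→∞} (1/η) log N₅(η) = -4`, i.e. the hitting
probability of a hyperbolic ball for the 5-dimensional hyperbolic Brownian motion decays
with exponential rate `n - 1 = 4`. -/
theorem hitting_decay_dim5 :
    (∀ᶠ η : ℝ in Filter.atTop, 0 < N₅ η) ∧
    Filter.Tendsto (fun η : ℝ => (1 / η) * Real.log (N₅ η)) Filter.atTop (nhds (-4)) := by
  constructor
  · filter_upwards [eventually_gt_atTop 0] with η hη using N5_pos hη
  · have he : Tendsto (fun η : ℝ => Real.exp (-η) ^ 2) atTop (nhds 0) := by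
      have : Tendsto (fun η : ℝ => Real.exp (-η)) atTop (nhds 0) :=
        Real.tendsto_exp_atBot.comp tendsto_neg_atTop_atBot
      simpa using this.pow 2
    have hg : Tendsto (fun η : ℝ =>
        Real.log 4 + Real.log (3 - Real.exp (-η) ^ 2) - 3 * Real.log (1 - Real.exp (-η) ^ 2))
        atTop (nhds (Real.log 4 + Real.log 3 - 3 * Real.log 1)) := by
      have h3 : Tendsto (fun η : ℝ => Real.log (3 - Real.exp (-η) ^ 2)) atTop (nhds (Real.log 3)) := by
        have hsub : Tendsto (fun η : ℝ => 3 - Real.exp (-η) ^ 2) atTop (nhds 3) := by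
          simpa using tendsto_const_nhds.sub he
        exact (Real.continuousAt_log (by norm_num : (3:ℝ) ≠ 0)).tendsto.comp hsub
      have h4 : Tendsto (fun η : ℝ => Real.log (1 - Real.exp (-η) ^ 2)) atTop (nhds (Real.log 1)) := by
        have hsub : Tendsto (fun η : ℝ => 1 - Real.exp (-η) ^ 2) atTop (nhds 1) := by
          simpa using tendsto_const_nhds.sub he
        exact (Real.continuousAt_log (by norm_num : (1:ℝ) ≠ 0)).tendsto.comp hsub
      exact (tendsto_const_nhds.add h3).sub (h4.const_mul 3)
    have hinv : Tendsto (fun η : ℝ => 1 / η) atTop (nhds 0) := by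
      simpa [one_div] using (tendsto_inv_atTop_zero : Tendsto (fun η : ℝ => η⁻¹) atTop (nhds 0))
    have hmain : Tendsto (fun η : ℝ => -4 + (1 / η) *
        (Real.log 4 + Real.log (3 - Real.exp (-η) ^ 2) - 3 * Real.log (1 - Real.exp (-η) ^ 2)))
        atTop (nhds (-4 + 0 * (Real.log 4 + Real.log 3 - 3 * Real.log 1))) :=
      tendsto_const_nhds.add (hinv.mul hg)
    rw [show (-4:ℝ) = -4 + 0 * (Real.log 4 + Real.log 3 - 3 * Real.log 1) by ring]
    refine hmain.congr' ?_
    filter_upwards [eventually_gt_atTop 0] with η hη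
    rw [N5_log hη]
    field_simp
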